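/- For λ ∈ {XY, XZ, YZ}, α ∈ ℝ and c ∈ {0,1}, let E_{λ,α,c} : ℂ² ⊗ ℂ² → ℂ be the symmetric green-fusion success effect E_{λ,α,c} = ⟨+_{λ,α}| ∘ M ∘ (S^c ⊗ S^c), where M = |0⟩⟨00| + |1⟩⟨11| and S = diag(1, i). Suppose α is an integer multiple of π/2 (the stabilizer case). Then either E_{λ,α,c} is a product effect (proportional to ⟨x| ⊗ ⟨y| for single-qubit effects ⟨x|, ⟨y|; the trivial Z-fusion case), or there exist a complex number z with |z| = 1 and a bit b ∈ {0,1} such that E_{λ,α,c} = z · (1/√2)(⟨00| + ⟨11|) ∘ (I ⊗ Z^b) (an X-fusion up to Pauli) or E_{λ,α,c} = z · (1/√2)(⟨00| + i⟨11|) ∘ (I ⊗ Z^b) (a Y-fusion up to Pauli). In words: up to local Paulis on the target qubits, every entangling stabilizer fusion with green failure is either an X-fusion or a Y-fusion. -/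

import Mathlib

open Complex

/-- The three measurement planes. -/
inductive Plane | XY | XZ | YZ

/-- The plane-measurement effects on `ℂ²`, as functionals on basis states:
`⟨+_{XY,α}| = (1/√2)(⟨0| + e^{iα}⟨1|)`,
`⟨+_{YZ,α}| = (1/√2)(⟨+| + e^{iα}⟨−|)`, and
`⟨+_{XZ,α}| = (1/√2)(⟨i| + e^{iα}⟨−i|)` with `|±i⟩ = (|0⟩ ± i|1⟩)/√2`. -/
noncomputable def planeEffect (pl : Plane) (α : ℝ) (c : Fin 2) : ℂ :=
  match pl with
  | Plane.XY => ((Real.sqrt 2 : ℂ))⁻¹ * (if c = 0 then 1 else Complex.exp (α * Complex.I))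
  | Plane.YZ => (1 / 2 : ℂ) * (1 + (-1 : ℂ) ^ (c : ℕ) * Complex.exp (α * Complex.I))
  | Plane.XZ => (1 / 2 : ℂ) *
      ((-Complex.I) ^ (c : ℕ) + Complex.I ^ (c : ℕ) * Complex.exp (α * Complex.I))

/-- The symmetric green-fusion success effect
`E_{λ,α,c} = ⟨+_{λ,α}| ∘ M ∘ (S^c ⊗ S^c)` on `ℂ² ⊗ ℂ²`, where
`M = |0⟩⟨00| + |1⟩⟨11|` is the spider-merge map and `S = diag(1, i)`;
`E_{λ,α,c}(|a⟩⊗|b⟩) = i^{ca}·i^{cb}·[a = b]·⟨+_{λ,α}|a⟩`. -/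
noncomputable def greenFusionEffect (pl : Plane) (α : ℝ) (c : Fin 2) (a b : Fin 2) : ℂ :=
  (if a = b then planeEffect pl α a else 0) *
    Complex.I ^ ((c : ℕ) * (a : ℕ)) * Complex.I ^ ((c : ℕ) * (b : ℕ))

lemma exp_eq (α : ℝ) (kk : ℤ) (h : α = kk * (Real.pi/2)) :
    Complex.exp (α * Complex.I) = Complex.I ^ kk := by
  subst h
  push_cast
  rw [mul_assoc, Complex.exp_int_mul]
  congr 1
  rw [Complex.exp_mul_I]
  simp [Complex.cos_pi_div_two, Complex.sin_pi_div_two]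

lemma I_zpow_cases (kk : ℤ) :
    (I:ℂ) ^ kk = 1 ∨ (I:ℂ)^kk = I ∨ (I:ℂ)^kk = -1 ∨ (I:ℂ)^kk = -I := by
  have h4 : (I:ℂ) ^ (4:ℤ) = 1 := by
    rw [show (4:ℤ) = ((4:ℕ):ℤ) by norm_num, zpow_natCast, Complex.I_pow_four]
  have hd : (I:ℂ) ^ kk = (I:ℂ) ^ (kk % 4) := by
    conv_lhs => rw [← Int.mul_ediv_add_emod kk 4]
    rw [zpow_add₀ Complex.I_ne_zero, zpow_mul, h4, one_zpow, one_mul]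
  have h0 : 0 ≤ kk % 4 := Int.emod_nonneg kk (by norm_num)
  have h1 : kk % 4 < 4 := Int.emod_lt_of_pos kk (by norm_num)
  interval_cases h : kk % 4 <;> rw [hd]
  · left; norm_num
  · right; left; norm_num
  · right; right; left
    rw [show (2:ℤ) = ((2:ℕ):ℤ) by norm_num, zpow_natCast, Complex.I_sq]
  · right; right; right
    rw [show (3:ℤ) = ((3:ℕ):ℤ) by norm_num, zpow_natCast, pow_succ, Complex.I_sq]
    ring

lemma abs_half_one_add_I : ‖(1 + I)/2‖ = (Real.sqrt 2)⁻¹ := by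
  rw [Complex.norm_def]
  have : Complex.normSq ((1 + I)/2) = 2⁻¹ := by
    simp [Complex.normSq_apply, Complex.div_re, Complex.div_im]
    norm_num
  rw [this, Real.sqrt_inv]

lemma abs_half_one_sub_I : ‖(1 - I)/2‖ = (Real.sqrt 2)⁻¹ := by
  rw [Complex.norm_def]
  have : Complex.normSq ((1 - I)/2) = 2⁻¹ := by
    simp [Complex.normSq_apply, Complex.div_re, Complex.div_im]
    norm_num
  rw [this, Real.sqrt_inv]

lemma abs_inv_sqrt2 : ‖(((Real.sqrt 2 : ℝ):ℂ))⁻¹‖ = (Real.sqrt 2)⁻¹ := by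
  rw [norm_inv, Complex.norm_real, Real.norm_eq_abs, _root_.abs_of_nonneg (Real.sqrt_nonneg 2)]

lemma sqrt2C_ne : ((Real.sqrt 2 : ℂ)) ≠ 0 := by
  have : (0:ℝ) < Real.sqrt 2 := Real.sqrt_pos.mpr (by norm_num)
  exact_mod_cast this.ne'

lemma abs_sqrt2C : ‖((Real.sqrt 2 : ℝ) : ℂ)‖ = Real.sqrt 2 := by
  rw [Complex.norm_real, Real.norm_eq_abs, _root_.abs_of_nonneg (Real.sqrt_nonneg 2)]

lemma abs_one_add_I' : ‖(1 + I)‖ = Real.sqrt 2 := by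
  rw [Complex.norm_def]
  congr 1
  simp [Complex.normSq_apply]
  norm_num

lemma abs_one_sub_I' : ‖(1 - I)‖ = Real.sqrt 2 := by
  rw [Complex.norm_def]
  congr 1
  simp [Complex.normSq_apply]
  norm_num

lemma sqrt2_half : Real.sqrt 2 * (1/2) = (Real.sqrt 2)⁻¹ := by
  have h2 : Real.sqrt 2 * Real.sqrt 2 = 2 := Real.mul_self_sqrt (by norm_num)
  have hne : Real.sqrt 2 ≠ 0 := (Real.sqrt_pos.mpr (by norm_num)).ne'
  field_simp
  try linarith

lemma key (f : Fin 2 → ℂ)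
    (h : f 0 = 0 ∨ f 1 = 0 ∨ (‖f 0‖ = (Real.sqrt 2 : ℝ)⁻¹ ∧
      (f 1 = f 0 ∨ f 1 = -f 0 ∨ f 1 = I * f 0 ∨ f 1 = -(I * f 0)))) :
    (∃ x y : Fin 2 → ℂ, ∀ a b : Fin 2, (if a = b then f a else 0) = x a * y b) ∨
    (∃ z : ℂ, ‖z‖ = 1 ∧ ∃ bb : Fin 2, ∀ a b : Fin 2,
      (if a = b then f a else 0) =
        z * (((Real.sqrt 2 : ℂ))⁻¹ * (if a = b then (-1 : ℂ) ^ ((bb : ℕ) * (b : ℕ)) else 0))) ∨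
    (∃ z : ℂ, ‖z‖ = 1 ∧ ∃ bb : Fin 2, ∀ a b : Fin 2,
      (if a = b then f a else 0) =
        z * (((Real.sqrt 2 : ℂ))⁻¹ *
          (if a = b then Complex.I ^ (a : ℕ) * (-1 : ℂ) ^ ((bb : ℕ) * (b : ℕ)) else 0))) := by
  have hs := sqrt2C_ne
  rcases h with h0 | h1 | ⟨habs, hr⟩
  · left
    exact ⟨f, (fun b => if b = 0 then 0 else 1), by intro a b; fin_cases a <;> fin_cases b <;> simp [h0]⟩
  · left
    exact ⟨f, (fun b => if b = 0 then 1 else 0), by intro a b; fin_cases a <;> fin_cases b <;> simp [h1]⟩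
  · have hz : ‖(Real.sqrt 2 : ℂ) * f 0‖ = 1 := by
      rw [norm_mul, abs_sqrt2C, habs, mul_inv_cancel₀ (Real.sqrt_pos.mpr (by norm_num)).ne']
    rcases hr with hr | hr | hr | hr
    · right; left
      refine ⟨(Real.sqrt 2 : ℂ) * f 0, hz, 0, fun a b => ?_⟩
      fin_cases a <;> fin_cases b <;> simp [hr] <;> field_simp
    · right; left
      refine ⟨(Real.sqrt 2 : ℂ) * f 0, hz, 1, fun a b => ?_⟩
      fin_cases a <;> fin_cases b <;> simp [hr] <;> field_simp
    · right; right
      refine ⟨(Real.sqrt 2 : ℂ) * f 0, hz, 0, fun a b => ?_⟩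
      fin_cases a <;> fin_cases b <;> simp [hr] <;> field_simp <;> ring
    · right; right
      refine ⟨(Real.sqrt 2 : ℂ) * f 0, hz, 1, fun a b => ?_⟩
      fin_cases a <;> fin_cases b <;> simp [hr] <;> field_simp <;> ring

set_option maxHeartbeats 2000000 in
/-- In the stabilizer case (`α` an integer multiple of `π/2`), every symmetric green
fusion effect `E_{λ,α,c}` is either a product effect (the trivial Z-fusion case), or, up
to a unit scalar `z` and a Pauli `Z^b` on the second qubit, equal to the X-fusion effect
`(1/√2)(⟨00| + ⟨11|)` or to the Y-fusion effect `(1/√2)(⟨00| + i⟨11|)`: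
up to local Paulis, every entangling stabilizer fusion with green failure is an X-fusion
or a Y-fusion. -/
theorem stabilizer_green_fusion_is_X_or_Y
    (pl : Plane) (α : ℝ) (c : Fin 2) (hα : ∃ kk : ℤ, α = kk * (Real.pi / 2)) :
    (∃ x y : Fin 2 → ℂ, ∀ a b : Fin 2, greenFusionEffect pl α c a b = x a * y b) ∨
    (∃ z : ℂ, ‖z‖ = 1 ∧ ∃ bb : Fin 2, ∀ a b : Fin 2,
      greenFusionEffect pl α c a b =
        z * (((Real.sqrt 2 : ℂ))⁻¹ *
          (if a = b then (-1 : ℂ) ^ ((bb : ℕ) * (b : ℕ)) else 0))) ∨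
    (∃ z : ℂ, ‖z‖ = 1 ∧ ∃ bb : Fin 2, ∀ a b : Fin 2,
      greenFusionEffect pl α c a b =
        z * (((Real.sqrt 2 : ℂ))⁻¹ *
          (if a = b then Complex.I ^ (a : ℕ) * (-1 : ℂ) ^ ((bb : ℕ) * (b : ℕ)) else 0))) := by
  obtain ⟨kk, hk⟩ := hα
  have ht := exp_eq α kk hk
  have hE : ∀ a b : Fin 2, greenFusionEffect pl α c a b =
      if a = b then (fun a : Fin 2 => planeEffect pl α a * (-1:ℂ)^((c:ℕ)*(a:ℕ))) a else 0 := by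
    intro a b
    fin_cases c <;> fin_cases a <;> fin_cases b <;>
      simp [greenFusionEffect] <;> ring_nf <;> simp [Complex.I_sq]
  simp only [hE]
  apply key
  rcases I_zpow_cases kk with h4 | h4 | h4 | h4 <;> rw [h4] at ht <;>
    fin_cases c <;> cases pl <;>
    simp [greenFusionEffect, planeEffect, ht, abs_inv_sqrt2, abs_half_one_add_I,
      abs_half_one_sub_I, Complex.I_ne_zero, sqrt2C_ne, Complex.I_mul_I] <;>
    norm_num [abs_half_one_add_I, abs_half_one_sub_I, abs_one_add_I', abs_one_sub_I',
      sqrt2_half] <;>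
    ring_nf <;>
    simp [Complex.I_sq, sqrt2_half] <;>
    ring_nf <;>
    first
      | tauto
      | (simp [abs_one_add_I', abs_one_sub_I', sqrt2_half]; done)
      | (norm_num [abs_one_add_I', abs_one_sub_I', sqrt2_half]; done)
      | (rw [sqrt2_half]; done)
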